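/- Let Q = (1/√2)·[[1,0,0,i],[0,i,1,0],[0,i,−1,0],[1,0,0,−i]], and for a 4×4 complex matrix M with det M ≠ 0 define M_B = Q†MQ, m₁(M) = [tr(M_Bᵀ M_B)]² / (16 · det(M†)), and m₂(M) = ([tr(M_Bᵀ M_B)]² − tr((M_Bᵀ M_B)²)) / (4 · det(M†)). If M is a 4×4 unitary and L = (u₁ ⊗ u₂) M (v₁ ⊗ v₂) for some u₁, u₂, v₁, v₂ ∈ SU(2), then m₁(L) = m₁(M) and m₂(L) = m₂(M), and moreover L_Bᵀ L_B and M_Bᵀ M_B have the same characteristic polynomial (hence the same spectrum). In particular locally equivalent two-qubit gates have identical Makhlin invariants. -/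

import Mathlib

open Complex Matrix Kronecker

/-- The Bell (magic) basis change matrix `Q`. -/
noncomputable def Q : Matrix (Fin 4) (Fin 4) ℂ :=
  (1 / (Real.sqrt 2 : ℂ)) •
    !![1, 0, 0, Complex.I;
       0, Complex.I, 1, 0;
       0, Complex.I, -1, 0;
       1, 0, 0, -Complex.I]

/-- The Kronecker product of two single-qubit operators, as a 4×4 matrix with the
basis ordering `|00⟩,|01⟩,|10⟩,|11⟩`. -/
noncomputable def kron2 (A B : Matrix (Fin 2) (Fin 2) ℂ) : Matrix (Fin 4) (Fin 4) ℂ :=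
  Matrix.reindex finProdFinEquiv finProdFinEquiv (A ⊗ₖ B)

/-- A two-qubit gate expressed in the Bell basis: `M_B = Q† M Q`. -/
noncomputable def bellB (M : Matrix (Fin 4) (Fin 4) ℂ) : Matrix (Fin 4) (Fin 4) ℂ :=
  Qᴴ * M * Q

/-- The first Makhlin invariant `m₁(M) = [tr(M_Bᵀ M_B)]² / (16 det M†)`. -/
noncomputable def makhlin₁ (M : Matrix (Fin 4) (Fin 4) ℂ) : ℂ :=
  (Matrix.trace ((bellB M)ᵀ * bellB M)) ^ 2 / (16 * (Mᴴ).det)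

/-- The second Makhlin invariant
`m₂(M) = ([tr(M_Bᵀ M_B)]² − tr((M_Bᵀ M_B)²)) / (4 det M†)`. -/
noncomputable def makhlin₂ (M : Matrix (Fin 4) (Fin 4) ℂ) : ℂ :=
  ((Matrix.trace ((bellB M)ᵀ * bellB M)) ^ 2 -
      Matrix.trace (((bellB M)ᵀ * bellB M) ^ 2)) / (4 * (Mᴴ).det)

def Sm : Matrix (Fin 4) (Fin 4) ℂ := !![0,0,0,1; 0,0,-1,0; 0,-1,0,0; 1,0,0,0]
def J2 : Matrix (Fin 2) (Fin 2) ℂ := !![0,1; -1,0]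

lemma h2 : ((Real.sqrt 2 : ℝ) : ℂ) * ((Real.sqrt 2 : ℝ) : ℂ) = 2 := by
  rw [← Complex.ofReal_mul, Real.mul_self_sqrt (by norm_num)]
  norm_num

lemma hQunit : Qᴴ * Q = 1 := by
  ext i j
  fin_cases i <;> fin_cases j <;>
    simp [Q, Matrix.mul_apply, Fin.sum_univ_four, Matrix.conjTranspose_apply, Complex.ext_iff,
      div_mul_div_comm] <;>
    norm_num [Real.sq_sqrt, Real.sqrt_eq_iff_eq_sq] <;>
    ring_nf <;>
    norm_num [Real.sq_sqrt]

lemma hQunit' : Q * Qᴴ = 1 := mul_eq_one_comm.mp hQunit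

lemma hQSm : (Qᴴ)ᵀ * Qᴴ = Sm := by
  ext i j
  fin_cases i <;> fin_cases j <;>
    simp [Q, Sm, Matrix.mul_apply, Fin.sum_univ_four, Matrix.conjTranspose_apply,
      Matrix.transpose_apply, Matrix.vecHead, Matrix.vecTail, Complex.ext_iff,
      div_mul_div_comm] <;>
    norm_num [Real.sq_sqrt]

lemma hQSmQ : Qᵀ * (Sm * Q) = 1 := by
  ext i j
  fin_cases i <;> fin_cases j <;>
    simp [Q, Sm, Matrix.mul_apply, Fin.sum_univ_four, Matrix.transpose_apply,
      Matrix.vecHead, Matrix.vecTail, Complex.ext_iff, div_mul_div_comm] <;>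
    norm_num [Real.sq_sqrt]

lemma hSmKron : Sm = kron2 J2 J2 := by
  ext i j
  fin_cases i <;> fin_cases j <;>
    simp [Sm, J2, kron2, Matrix.kroneckerMap_apply, finProdFinEquiv, Fin.divNat, Fin.modNat,
      Matrix.cons_val_zero, Matrix.cons_val_one, Matrix.vecHead, Matrix.vecTail,
      show ((0:Fin 4):ℕ) = 0 from rfl, show ((1:Fin 4):ℕ) = 1 from rfl,
      show ((2:Fin 4):ℕ) = 2 from rfl, show ((3:Fin 4):ℕ) = 3 from rfl] <;>
    norm_num [Fin.ext_iff, Fin.mk_one, Fin.mk_zero, Matrix.vecHead, Matrix.vecTail]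

lemma hJconj (u : Matrix (Fin 2) (Fin 2) ℂ) (hu : u.det = 1) : uᵀ * J2 * u = J2 := by
  rw [Matrix.det_fin_two] at hu
  ext i j
  fin_cases i <;> fin_cases j <;>
    simp [J2, Matrix.mul_apply, Fin.sum_univ_two] <;>
    (first | linear_combination hu | linear_combination -hu | ring1)

lemma kron2_mul (A B C D : Matrix (Fin 2) (Fin 2) ℂ) :
    kron2 A B * kron2 C D = kron2 (A * C) (B * D) := by
  simp only [kron2, Matrix.reindex_apply]
  rw [Matrix.submatrix_mul_equiv, Matrix.mul_kronecker_mul]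

lemma kron2_transpose (A B : Matrix (Fin 2) (Fin 2) ℂ) :
    (kron2 A B)ᵀ = kron2 Aᵀ Bᵀ := by
  simp only [kron2, Matrix.reindex_apply, Matrix.transpose_submatrix, ← Matrix.kroneckerMap_transpose]


lemma kron_orth (u v : Matrix (Fin 2) (Fin 2) ℂ) (h1 : u.det = 1) (h2 : v.det = 1) :
    (Qᴴ * kron2 u v * Q)ᵀ * (Qᴴ * kron2 u v * Q) = 1 := by
  have hK : (kron2 u v)ᵀ * (Sm * kron2 u v) = Sm := by
    rw [hSmKron, kron2_transpose, ← Matrix.mul_assoc, kron2_mul, kron2_mul,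
      hJconj u h1, hJconj v h2]
  have hQSm' : ∀ X : Matrix (Fin 4) (Fin 4) ℂ, (Qᴴ)ᵀ * (Qᴴ * X) = Sm * X := fun X => by
    rw [← Matrix.mul_assoc, hQSm]
  have hK' : ∀ X : Matrix (Fin 4) (Fin 4) ℂ,
      (kron2 u v)ᵀ * (Sm * (kron2 u v * X)) = Sm * X := fun X => by
    rw [← Matrix.mul_assoc, ← Matrix.mul_assoc, Matrix.mul_assoc (kron2 u v)ᵀ, hK]
  simp only [Matrix.transpose_mul, Matrix.mul_assoc]
  rw [hQSm' (kron2 u v * Q), hK' Q, hQSmQ]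

lemma charpoly_orth_conj (A P : Matrix (Fin 4) (Fin 4) ℂ) (hP : Pᵀ * P = 1) :
    (Pᵀ * A * P).charpoly = A.charpoly := by
  have hmap : (P.map (Polynomial.C : ℂ → _))ᵀ * P.map Polynomial.C = 1 := by
    rw [← Matrix.transpose_map, ← Matrix.map_mul (f := (Polynomial.C : ℂ →+* Polynomial ℂ)), hP]
    exact Matrix.map_one _ (map_zero _) (map_one _)
  have key : Matrix.charmatrix (Pᵀ * A * P)
      = (P.map Polynomial.C)ᵀ * Matrix.charmatrix A * P.map Polynomial.C := by
    unfold Matrix.charmatrix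
    rw [Matrix.mul_sub, Matrix.sub_mul]
    congr 1
    · rw [Matrix.mul_assoc,
        (Matrix.scalar_commute (Polynomial.X : Polynomial ℂ)
          (fun r' => Commute.all _ _) (P.map Polynomial.C)).eq,
        ← Matrix.mul_assoc, hmap, Matrix.one_mul]
    · simp only [RingHom.mapMatrix_apply]
      rw [← Matrix.transpose_map,
        ← Matrix.map_mul (f := (Polynomial.C : ℂ →+* Polynomial ℂ)),
        ← Matrix.map_mul (f := (Polynomial.C : ℂ →+* Polynomial ℂ))]
  unfold Matrix.charpoly
  rw [key, Matrix.det_mul, Matrix.det_mul, mul_comm, ← mul_assoc, ← Matrix.det_mul,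
    mul_eq_one_comm.mp hmap, Matrix.det_one, one_mul]

lemma kron2_det (A B : Matrix (Fin 2) (Fin 2) ℂ) : (kron2 A B).det = A.det ^ 2 * B.det ^ 2 := by
  rw [kron2, Matrix.reindex_apply, Matrix.det_submatrix_equiv_self, Matrix.det_kronecker]
  simp

/-- locally equivalent two-qubit gates have identical Makhlin invariants,
and `L_Bᵀ L_B` and `M_Bᵀ M_B` have the same characteristic polynomial (hence spectrum). -/
theorem makhlin_invariants_local_equivalence
    (M : Matrix (Fin 4) (Fin 4) ℂ) (hM : M ∈ Matrix.unitaryGroup (Fin 4) ℂ)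
    (u₁ u₂ v₁ v₂ : Matrix (Fin 2) (Fin 2) ℂ)
    (hu₁ : u₁ ∈ Matrix.unitaryGroup (Fin 2) ℂ) (hdu₁ : u₁.det = 1)
    (hu₂ : u₂ ∈ Matrix.unitaryGroup (Fin 2) ℂ) (hdu₂ : u₂.det = 1)
    (hv₁ : v₁ ∈ Matrix.unitaryGroup (Fin 2) ℂ) (hdv₁ : v₁.det = 1)
    (hv₂ : v₂ ∈ Matrix.unitaryGroup (Fin 2) ℂ) (hdv₂ : v₂.det = 1)
    (L : Matrix (Fin 4) (Fin 4) ℂ) (hL : L = kron2 u₁ u₂ * M * kron2 v₁ v₂) :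
    makhlin₁ L = makhlin₁ M ∧ makhlin₂ L = makhlin₂ M ∧
      ((bellB L)ᵀ * bellB L).charpoly = ((bellB M)ᵀ * bellB M).charpoly := by
  set K := kron2 u₁ u₂ with hK
  set N := kron2 v₁ v₂ with hN
  set O := Qᴴ * N * Q with hO
  set P := Qᴴ * K * Q with hP
  have hqq : ∀ X : Matrix (Fin 4) (Fin 4) ℂ, Q * (Qᴴ * X) = X := fun X => by
    rw [← Matrix.mul_assoc, hQunit', Matrix.one_mul]
  -- bellB L = P * bellB M * O
  have hbell : bellB L = P * (bellB M * O) := by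
    rw [hL, bellB, bellB, hO, hP]
    simp only [Matrix.mul_assoc]
    rw [hqq, hqq]
  have hPP : Pᵀ * P = 1 := kron_orth u₁ u₂ hdu₁ hdu₂
  have hOO : Oᵀ * O = 1 := kron_orth v₁ v₂ hdv₁ hdv₂
  have hOO' : O * Oᵀ = 1 := mul_eq_one_comm.mp hOO
  have hPP' : ∀ X : Matrix (Fin 4) (Fin 4) ℂ, Pᵀ * (P * X) = X := fun X => by
    rw [← Matrix.mul_assoc, hPP, Matrix.one_mul]
  -- the similarity
  have hsim : (bellB L)ᵀ * bellB L = Oᵀ * ((bellB M)ᵀ * bellB M) * O := by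
    rw [hbell]
    simp only [Matrix.transpose_mul, Matrix.mul_assoc]
    rw [hPP']
  -- traces
  have htr : Matrix.trace ((bellB L)ᵀ * bellB L) = Matrix.trace ((bellB M)ᵀ * bellB M) := by
    rw [hsim, Matrix.trace_mul_comm, ← Matrix.mul_assoc, hOO', Matrix.one_mul]
  have htr2 : Matrix.trace (((bellB L)ᵀ * bellB L) ^ 2)
      = Matrix.trace (((bellB M)ᵀ * bellB M) ^ 2) := by
    have hsq : ((bellB L)ᵀ * bellB L) ^ 2
        = Oᵀ * (((bellB M)ᵀ * bellB M) ^ 2) * O := by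
      rw [hsim, pow_two, pow_two]
      simp only [Matrix.mul_assoc]
      rw [show O * (Oᵀ * ((bellB M)ᵀ * (bellB M * O)))
            = (O * Oᵀ) * ((bellB M)ᵀ * (bellB M * O)) from (Matrix.mul_assoc _ _ _).symm,
        hOO', Matrix.one_mul]
    rw [hsq, Matrix.trace_mul_comm, ← Matrix.mul_assoc, hOO', Matrix.one_mul]
  -- determinants
  have hdetL : L.det = M.det := by
    rw [hL, Matrix.det_mul, Matrix.det_mul, hK, hN, kron2_det, kron2_det,
      hdu₁, hdu₂, hdv₁, hdv₂]
    ring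
  have hdet : (Lᴴ).det = (Mᴴ).det := by
    rw [Matrix.det_conjTranspose, Matrix.det_conjTranspose, hdetL]
  refine ⟨?_, ?_, ?_⟩
  · unfold makhlin₁; rw [htr, hdet]
  · unfold makhlin₂; rw [htr, htr2, hdet]
  · rw [hsim]
    exact charpoly_orth_conj _ _ hOO
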